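/- Let m ≥ 1, k = ℓ + m − 1, and A₀, A₁, …, A_m ∈ ℂ^{k×ℓ}, with W(λ) = A₀ + Σ_{i=1}^m λ_i A_i. Suppose there exist injective row-selection maps r₁, …, r_m : {1, …, ℓ} → {1, …, k} such that, writing V_{ij} ∈ ℂ^{ℓ×ℓ} for the submatrix of A_j formed by the rows r_i(1), …, r_i(ℓ) (for i = 1, …, m and j = 0, 1, …, m), each V_{ij} is Hermitian, and the operator determinant Δ₀ — the square matrix indexed by pairs of functions f, g : {1, …, m} → {1, …, ℓ} whose (f, g)-entry is Σ_{σ ∈ S_m} sgn(σ) ∏_{i=1}^m (V_{i σ(i)})_{f(i), g(i)} — is Hermitian positive definite. Then every eigenvalue of the rectangular multiparameter eigenvalue problem is real: if λ ∈ ℂ^m and there exists x ∈ ℂ^ℓ, x ≠ 0, with W(λ) x = 0, then λ ∈ ℝ^m. Moreover, if in addition all coefficient matrices A₀, …, A_m have real entries, then for every such eigenvalue λ there exists a real eigenvector x ∈ ℝ^ℓ, x ≠ 0, with W(λ) x = 0. -/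

import Mathlib

open scoped ComplexOrder
open Matrix

noncomputable def enorm {n : ℕ} (x : Fin n → ℂ) : ℝ :=
  ‖(WithLp.equiv 2 (Fin n → ℂ)).symm x‖

noncomputable def opNorm2 {k l : ℕ} (M : Matrix (Fin k) (Fin l) ℂ) : ℝ :=
  ‖LinearMap.toContinuousLinearMap (Matrix.toEuclideanLin M)‖

noncomputable def sigmaMin {k l : ℕ} (M : Matrix (Fin k) (Fin l) ℂ) : ℝ :=
  sInf {r : ℝ | ∃ x : Fin l → ℂ, _root_.enorm x = 1 ∧ r = _root_.enorm (M.mulVec x)}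

noncomputable def pencil {m k l : ℕ} (A : Fin (m + 1) → Matrix (Fin k) (Fin l) ℂ)
    (lam : Fin m → ℂ) : Matrix (Fin k) (Fin l) ℂ :=
  A 0 + ∑ i : Fin m, lam i • A i.succ

noncomputable def gammaVal {m k l : ℕ} (E : Fin (m + 1) → Matrix (Fin k) (Fin l) ℂ)
    (lam : Fin m → ℂ) : ℝ :=
  opNorm2 (E 0) + ∑ i : Fin m, ‖lam i‖ * opNorm2 (E i.succ)

lemma herm_quad_real {l : ℕ} {M : Matrix (Fin l) (Fin l) ℂ} (hM : M.IsHermitian)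
    (x : Fin l → ℂ) : star (star x ⬝ᵥ M.mulVec x) = star x ⬝ᵥ M.mulVec x := by
  rw [← star_dotProduct_star, star_star, star_mulVec, hM.eq, dotProduct_mulVec]

lemma prod_quad {m l : ℕ} (x : Fin l → ℂ) (M : Fin m → Matrix (Fin l) (Fin l) ℂ) :
    ∏ i : Fin m, (star x ⬝ᵥ (M i).mulVec x) =
      ∑ f : Fin m → Fin l, ∑ g : Fin m → Fin l,
        (∏ i, star (x (f i))) * (∏ i, M i (f i) (g i)) * ∏ i, x (g i) := by
  have h1 : ∀ i, star x ⬝ᵥ (M i).mulVec x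
      = ∑ a : Fin l, star (x a) * ∑ b : Fin l, M i a b * x b := fun i => rfl
  simp only [h1]
  rw [Fintype.prod_sum]
  refine Finset.sum_congr rfl fun f _ => ?_
  rw [Finset.prod_mul_distrib, Fintype.prod_sum, Finset.mul_sum]
  refine Finset.sum_congr rfl fun g _ => ?_
  rw [Finset.prod_mul_distrib]
  ring

/-- eigenvalues of a (nested) right definite rectangular
multiparameter eigenvalue problem are real, and real coefficient matrices admit
real eigenvectors. -/
theorem right_definite_real_eigenvalues {m k l : ℕ} (hm : 1 ≤ m) (hk : k = l + m - 1)
    (A : Fin (m + 1) → Matrix (Fin k) (Fin l) ℂ)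
    (r : Fin m → Fin l → Fin k) (hr : ∀ i, Function.Injective (r i))
    (hherm : ∀ (i : Fin m) (j : Fin (m + 1)), ((A j).submatrix (r i) id).IsHermitian)
    (hposdef : Matrix.PosDef (Matrix.of fun f g : Fin m → Fin l =>
      ∑ σ : Equiv.Perm (Fin m), ((Equiv.Perm.sign σ : ℤ) : ℂ) *
        ∏ i : Fin m, ((A (σ i).succ).submatrix (r i) id) (f i) (g i))) :
    ∀ lam : Fin m → ℂ,
      (∃ x : Fin l → ℂ, x ≠ 0 ∧ (pencil A lam).mulVec x = 0) →
      ((∀ i, (lam i).im = 0) ∧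
        ((∀ (j : Fin (m + 1)) (a : Fin k) (b : Fin l), (A j a b).im = 0) →
          ∃ xr : Fin l → ℝ, xr ≠ 0 ∧
            (pencil A lam).mulVec (fun i => ((xr i : ℝ) : ℂ)) = 0)) := by
  
  classical
  intro lam hlam
  obtain ⟨x, hx, hWx⟩ := hlam
  -- quadratic forms
  set q : Fin m → Fin (m + 1) → ℂ :=
    fun i j => star x ⬝ᵥ ((A j).submatrix (r i) id).mulVec x with hqdef
  have hq_real : ∀ i j, star (q i j) = q i j := fun i j => herm_quad_real (hherm i j) x
  -- row expansion of pencil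
  have hrow : ∀ c : Fin k, (A 0) c ⬝ᵥ x + ∑ j : Fin m, lam j * ((A (j.succ)) c ⬝ᵥ x) = 0 := by
    intro c
    have h := congrFun hWx c
    have h2 : (pencil A lam).mulVec x c
        = (A 0) c ⬝ᵥ x + ∑ j : Fin m, lam j * ((A (j.succ)) c ⬝ᵥ x) := by
      simp only [pencil, Matrix.mulVec, dotProduct, Matrix.add_apply, Matrix.sum_apply,
        Pi.add_apply, Matrix.smul_apply, smul_eq_mul, add_mul, Finset.sum_mul,
        Finset.sum_add_distrib, Finset.mul_sum, mul_assoc]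
      rw [Finset.sum_comm]
    rw [← h2, h]; rfl
  -- scalar equations
  have heq : ∀ i : Fin m, q i 0 + ∑ j : Fin m, lam j * q i j.succ = 0 := by
    intro i
    have hq0 : ∀ j : Fin (m + 1),
        q i j = ∑ a : Fin l, star (x a) * ((A j) (r i a) ⬝ᵥ x) := fun j => rfl
    calc q i 0 + ∑ j : Fin m, lam j * q i j.succ
        = ∑ a : Fin l, star (x a) *
            ((A 0) (r i a) ⬝ᵥ x + ∑ j : Fin m, lam j * ((A j.succ) (r i a) ⬝ᵥ x)) := by
          simp only [hq0, mul_add, Finset.mul_sum, Finset.sum_add_distrib]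
          congr 1
          rw [Finset.sum_comm]
          exact Finset.sum_congr rfl fun a _ => Finset.sum_congr rfl fun j _ => by ring
      _ = 0 := by simp [hrow]
  have heqc : ∀ i : Fin m, q i 0 + ∑ j : Fin m, star (lam j) * q i j.succ = 0 := by
    intro i
    have h := congrArg star (heq i)
    simpa [star_add, star_sum, star_mul', hq_real] using h
  -- the matrix B of quadratic forms
  set B : Matrix (Fin m) (Fin m) ℂ := Matrix.of fun i j => q i j.succ with hBdef
  have hBd : B.mulVec (fun j => lam j - star (lam j)) = 0 := by
    funext i
    have h1 := heq i
    have h2 := heqc i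
    have h3 : ∑ j : Fin m, (lam j - star (lam j)) * q i j.succ = 0 := by
      have := sub_eq_zero_of_eq (h1.trans h2.symm)
      simpa [sub_mul, Finset.sum_sub_distrib, add_sub_add_left_eq_sub] using this
    simpa [Matrix.mulVec, dotProduct, B, mul_comm] using h3
  -- the tensor vector X
  set X : (Fin m → Fin l) → ℂ := fun g => ∏ i : Fin m, x (g i) with hXdef
  have hXne : X ≠ 0 := by
    obtain ⟨a, ha⟩ := Function.ne_iff.mp hx
    intro h
    have h0 : X (fun _ => a) = 0 := congrFun h _
    rw [hXdef] at h0
    simp only [Finset.prod_const, Finset.card_univ, Fintype.card_fin] at h0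
    exact ha (pow_eq_zero_iff (Nat.one_le_iff_ne_zero.mp hm) |>.mp h0)
  have hpos := hposdef.dotProduct_mulVec_pos hXne
  -- determinant identity
  have hdet : Bᵀ.det = star X ⬝ᵥ (Matrix.of fun f g : Fin m → Fin l =>
      ∑ σ : Equiv.Perm (Fin m), ((Equiv.Perm.sign σ : ℤ) : ℂ) *
        ∏ i : Fin m, ((A (σ i).succ).submatrix (r i) id) (f i) (g i)).mulVec X := by
    have e1 : ∀ σ : Equiv.Perm (Fin m), (∏ i : Fin m, Bᵀ (σ i) i)
        = ∑ f : Fin m → Fin l, ∑ g : Fin m → Fin l,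
            (∏ i, star (x (f i))) *
              (∏ i, ((A (σ i).succ).submatrix (r i) id) (f i) (g i)) * ∏ i, x (g i) := by
      intro σ
      exact prod_quad x fun i => (A (σ i).succ).submatrix (r i) id
    rw [Matrix.det_apply']
    simp only [e1, Finset.mul_sum]
    rw [Finset.sum_comm]
    simp only [Matrix.mulVec, dotProduct, Matrix.of_apply, Finset.sum_mul, Finset.mul_sum]
    refine Finset.sum_congr rfl fun f _ => ?_
    rw [Finset.sum_comm]
    refine Finset.sum_congr rfl fun g _ => Finset.sum_congr rfl fun σ _ => ?_
    rw [hXdef]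
    simp only [Pi.star_apply, star_prod]
    ring
  have hdB : B.det ≠ 0 := by
    rw [← Matrix.det_transpose, hdet]
    exact ne_of_gt hpos
  have hinj : Function.Injective B.mulVec :=
    Matrix.mulVec_injective_iff_isUnit.mpr ((Matrix.isUnit_iff_isUnit_det _).mpr hdB.isUnit)
  have hd0 : (fun j => lam j - star (lam j)) = (0 : Fin m → ℂ) := by
    apply hinj
    rw [hBd, Matrix.mulVec_zero]
  have him : ∀ i, (lam i).im = 0 := by
    intro i
    have h := congrFun hd0 i
    have h1 : lam i = star (lam i) := sub_eq_zero.mp (by simpa using h)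
    have h2 : (lam i).im = -(lam i).im := by simpa using congrArg Complex.im h1
    linarith
  refine ⟨him, ?_⟩
  -- real eigenvector part
  intro hreal
  set W := pencil A lam with hWdef
  have hpim : ∀ c b, (W c b).im = 0 := by
    intro c b
    rw [hWdef]
    simp only [pencil, Matrix.add_apply, Matrix.sum_apply, Matrix.smul_apply, smul_eq_mul,
      Complex.add_im]
    rw [hreal 0 c b, Complex.im_sum]
    simp [Complex.mul_im, him, hreal]
  have hre0 : ∀ c, ∑ b, (W c b).re * (x b).re = 0 := by
    intro c
    have h := congrArg Complex.re (congrFun hWx c)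
    simpa [Matrix.mulVec, dotProduct, Complex.re_sum, Complex.mul_re, hpim] using h
  have him0 : ∀ c, ∑ b, (W c b).re * (x b).im = 0 := by
    intro c
    have h := congrArg Complex.im (congrFun hWx c)
    simpa [Matrix.mulVec, dotProduct, Complex.im_sum, Complex.mul_im, hpim] using h
  have main : ∀ v : Fin l → ℝ, (∀ c, ∑ b, (W c b).re * v b = 0) →
      W.mulVec (fun b => ((v b : ℝ) : ℂ)) = 0 := by
    intro v hv
    funext c
    have hvc := hv c
    apply Complex.ext
    · simpa [Matrix.mulVec, dotProduct, Complex.re_sum, Complex.mul_re, hpim] using hvc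
    · simp [Matrix.mulVec, dotProduct, Complex.im_sum, Complex.mul_im, hpim]
  by_cases hxe : (fun b => (x b).re) = (0 : Fin l → ℝ)
  · refine ⟨fun b => (x b).im, ?_, main _ him0⟩
    intro h
    apply hx
    funext b
    have h1 := congrFun hxe b
    have h2 := congrFun h b
    exact Complex.ext h1 h2
  · exact ⟨fun b => (x b).re, hxe, main _ hre0⟩
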